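/- Let A = {v₁,…,v_{d+2}} ⊆ ℤ^d be a set of d+2 points with A − A generating ℤ^d additively, and suppose λ₁,…,λ_{d+2} ∈ ℤ, not all zero, satisfy λ₁ṽ₁ + ⋯ + λ_{d+2}ṽ_{d+2} = 0 in ℤ^{d+1} with λᵢ equal (up to sign) to the cofactor determinants det of the lifts omitting ṽᵢ. Let P = {i : λᵢ > 0}. Then for every h ∈ ℕ, every element w of the h-fold sumset hA has exactly one representation w = α₁v₁ + ⋯ + α_{d+2}v_{d+2} with αᵢ ∈ ℕ, α₁+⋯+α_{d+2} = h, and αᵢ < λᵢ for at least one i ∈ P. Consequently |hA| equals the number of tuples (α₁,…,α_{d+2}) ∈ ℕ^{d+2} with α₁+⋯+α_{d+2} = h for which αᵢ < λᵢ for some i ∈ P. -/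

import Mathlib

open Pointwise

/-- The lift of `v ∈ ℤ^d` to `ṽ = (v, 1) ∈ ℤ^{d+1}`. -/
def liftZ {d : ℕ} (u : Fin d → ℤ) : Fin (d + 1) → ℤ := Fin.snoc u 1

/-- The `h`-fold sumset `hA = {a₁ + ⋯ + a_h : aᵢ ∈ A}` (with `0A = {0}`). -/
def hFoldSumset {d : ℕ} (A : Set (Fin d → ℤ)) (h : ℕ) : Set (Fin d → ℤ) :=
  {x | ∃ f : Fin h → (Fin d → ℤ), (∀ i, f i ∈ A) ∧ ∑ i, f i = x}

lemma liftZ_castSucc {d : ℕ} (u : Fin d → ℤ) (r : Fin d) : liftZ u r.castSucc = u r := by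
  simp [liftZ]

lemma liftZ_last {d : ℕ} (u : Fin d → ℤ) : liftZ u (Fin.last d) = 1 := by
  simp [liftZ]

/-- K1: the lifts generate all of `ℤ^{d+1}`. -/
lemma closure_lift_top {d : ℕ} (v : Fin (d + 2) → Fin d → ℤ)
    (hgen : AddSubgroup.closure (Set.range v - Set.range v) = ⊤) :
    AddSubgroup.closure (Set.range fun i => liftZ (v i)) = ⊤ := by
  set S := AddSubgroup.closure (Set.range fun i => liftZ (v i)) with hS
  rw [eq_top_iff]
  have hsnoc_add : ∀ x y : Fin d → ℤ,
      (Fin.snoc (x + y) 0 : Fin (d+1) → ℤ) = Fin.snoc x 0 + Fin.snoc y 0 := by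
    intro x y; funext r
    refine Fin.lastCases ?_ (fun r => ?_) r <;> simp
  have hsnoc_neg : ∀ x : Fin d → ℤ,
      (Fin.snoc (-x) 0 : Fin (d+1) → ℤ) = -Fin.snoc x 0 := by
    intro x; funext r
    refine Fin.lastCases ?_ (fun r => ?_) r <;> simp
  have key : ∀ x : Fin d → ℤ, (Fin.snoc x 0 : Fin (d+1) → ℤ) ∈ S := by
    intro x
    have hx : x ∈ AddSubgroup.closure (Set.range v - Set.range v) := by rw [hgen]; trivial
    induction hx using AddSubgroup.closure_induction with
    | mem y hy =>
        obtain ⟨a, ⟨i, rfl⟩, b, ⟨j, rfl⟩, rfl⟩ := hy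
        have : (Fin.snoc (v i - v j) 0 : Fin (d+1) → ℤ) = liftZ (v i) - liftZ (v j) := by
          funext r
          refine Fin.lastCases ?_ (fun r => ?_) r <;> simp [liftZ]
        rw [this]
        exact sub_mem (AddSubgroup.subset_closure ⟨i, rfl⟩) (AddSubgroup.subset_closure ⟨j, rfl⟩)
    | zero =>
        have : (Fin.snoc (0 : Fin d → ℤ) 0 : Fin (d+1) → ℤ) = 0 := by
          funext r; refine Fin.lastCases ?_ (fun r => ?_) r <;> simp
        rw [this]; exact S.zero_mem
    | add x y _ _ hx hy => rw [hsnoc_add]; exact S.add_mem hx hy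
    | neg x _ hx => rw [hsnoc_neg]; exact S.neg_mem hx
  intro u _
  have hdecomp : u = (u (Fin.last d)) • liftZ (v 0) +
      Fin.snoc (fun r => u r.castSucc - u (Fin.last d) * v 0 r) 0 := by
    funext r
    refine Fin.lastCases ?_ (fun r => ?_) r
    · simp [liftZ, smul_eq_mul]
    · simp only [Pi.add_apply, Pi.smul_apply, liftZ, Fin.snoc_castSucc, smul_eq_mul]
      ring
  rw [hdecomp]
  exact S.add_mem (S.zsmul_mem (AddSubgroup.subset_closure ⟨0, rfl⟩) _) (key _)

/-- K2: if a family generates `ℤ^n` as a group, its image mod a field spans. -/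
lemma span_cast_top {n m : ℕ} {F : Type} [Field F] (u : Fin m → (Fin n → ℤ))
    (hu : AddSubgroup.closure (Set.range u) = ⊤) :
    Submodule.span F (Set.range fun i => fun r => ((u i r : ℤ) : F)) = ⊤ := by
  set W := Submodule.span F (Set.range fun i => fun r => ((u i r : ℤ) : F)) with hW
  have key : ∀ x : Fin n → ℤ, (fun r => ((x r : ℤ) : F)) ∈ W := by
    intro x
    have hx : x ∈ AddSubgroup.closure (Set.range u) := by rw [hu]; trivial
    induction hx using AddSubgroup.closure_induction with
    | mem y hy =>
        obtain ⟨i, rfl⟩ := hy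
        exact Submodule.subset_span ⟨i, rfl⟩
    | zero =>
        have : (fun r => (((0 : Fin n → ℤ) r : ℤ) : F)) = 0 := by funext r; simp
        rw [this]; exact W.zero_mem
    | add x y _ _ hx hy =>
        have : (fun r => (((x + y) r : ℤ) : F)) = (fun r => ((x r : ℤ) : F)) + fun r => ((y r : ℤ) : F) := by
          funext r; push_cast; simp
        rw [this]; exact W.add_mem hx hy
    | neg x _ hx =>
        have : (fun r => (((-x) r : ℤ) : F)) = -fun r => ((x r : ℤ) : F) := by
          funext r; push_cast; simp
        rw [this]; exact W.neg_mem hx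
  rw [eq_top_iff]
  intro y _
  rw [pi_eq_sum_univ y]
  refine Submodule.sum_mem _ (fun j _ => Submodule.smul_mem _ _ ?_)
  have : (fun i => if j = i then (1:F) else 0) =
      fun r => (((fun i => if j = i then (1:ℤ) else 0) r : ℤ) : F) := by
    funext r; split <;> simp_all
  rw [this]; exact key _
/-- No prime divides all the cofactor values. -/
lemma no_prime_dvd {d : ℕ} (v : Fin (d + 2) → Fin d → ℤ)
    (hlift : AddSubgroup.closure (Set.range fun i => liftZ (v i)) = ⊤)
    (lam : Fin (d + 2) → ℤ)
    (hcof : ∀ i, (lam i).natAbs =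
      (Matrix.det (Matrix.of fun r (c : Fin (d + 1)) => liftZ (v (i.succAbove c)) r)).natAbs)
    {q : ℕ} (hq : q.Prime) (hdvd : ∀ i, (q : ℤ) ∣ lam i) : False := by
  haveI : Fact q.Prime := ⟨hq⟩
  set F := ZMod q
  set w : Fin (d + 2) → Fin (d + 1) → F := fun i => fun r => ((liftZ (v i) r : ℤ) : F) with hw
  have hspan : Submodule.span F (Set.range w) = ⊤ :=
    span_cast_top (fun i => liftZ (v i)) hlift
  -- the family w is linearly dependent
  have hdep : ¬ LinearIndependent F w := by
    intro hind
    have := hind.fintype_card_le_finrank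
    simp only [Module.finrank_pi, Fintype.card_fin, Finset.card_univ] at this
    omega
  obtain ⟨g, hgsum, i₀, hgi₀⟩ := Fintype.not_linearIndependent_iff.mp hdep
  -- the other d+1 vectors span
  have hspan2 : Submodule.span F (Set.range fun c => w (i₀.succAbove c)) = ⊤ := by
    rw [eq_top_iff, ← hspan, Submodule.span_le]
    rintro x ⟨i, rfl⟩
    by_cases hii : i = i₀
    · subst hii
      rw [Fin.sum_univ_succAbove (fun j => g j • w j) i] at hgsum
      have h1 : g i • w i = - ∑ c, g (i.succAbove c) • w (i.succAbove c) :=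
        add_eq_zero_iff_eq_neg.mp hgsum
      have hwi : w i = - ((g i)⁻¹ • ∑ c, g (i.succAbove c) • w (i.succAbove c)) := by
        rw [← smul_neg, ← h1, inv_smul_smul₀ hgi₀]
      rw [hwi]
      exact Submodule.neg_mem _ (Submodule.smul_mem _ _ (Submodule.sum_mem _ (fun c _ =>
        Submodule.smul_mem _ _ (Submodule.subset_span ⟨c, rfl⟩))))
    · obtain ⟨c, rfl⟩ := Fin.exists_succAbove_eq hii
      exact Submodule.subset_span ⟨c, rfl⟩
  -- hence the square matrix of them is invertible
  set N : Matrix (Fin (d + 1)) (Fin (d + 1)) F :=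
    Matrix.of fun r c => w (i₀.succAbove c) r with hN
  have hsurj : Function.Surjective N.mulVec := by
    have hr : LinearMap.range N.mulVecLin = ⊤ := by
      rw [Matrix.range_mulVecLin]
      have : N.col = fun c => w (i₀.succAbove c) := rfl
      rw [this, hspan2]
    intro y
    obtain ⟨x, hx⟩ := (LinearMap.range_eq_top.mp hr).exists.mp ⟨y, rfl⟩
    exact ⟨x, by simpa using hx.symm⟩
  have hunit : IsUnit N.det := (Matrix.isUnit_iff_isUnit_det N).mp
    (Matrix.mulVec_surjective_iff_isUnit.mp hsurj)
  have hdetne : N.det ≠ 0 := hunit.ne_zero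
  -- but its determinant is the reduction of an integer divisible by q
  set M : Matrix (Fin (d + 1)) (Fin (d + 1)) ℤ :=
    Matrix.of fun r c => liftZ (v (i₀.succAbove c)) r with hM
  have hmap : N = (Int.castRingHom F).mapMatrix M := by
    ext r c; rfl
  have hq1 : (q : ℤ) ∣ M.det := by
    have h1 : q ∣ (lam i₀).natAbs := by
      rw [← Int.natAbs_natCast q]
      exact Int.natAbs_dvd_natAbs.mpr (hdvd i₀)
    rw [hcof i₀] at h1
    rw [← Int.natAbs_dvd_natAbs, Int.natAbs_natCast]
    exact h1
  have : N.det = 0 := by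
    rw [hmap, ← RingHom.map_det]
    exact (ZMod.intCast_zmod_eq_zero_iff_dvd _ _).mpr hq1
  exact hdetne this
/-- K3: every integer relation among the lifts is a multiple of `lam`. -/
lemma ker_eq_span {d : ℕ} (v : Fin (d + 2) → Fin d → ℤ)
    (hgen : AddSubgroup.closure (Set.range v - Set.range v) = ⊤)
    (lam : Fin (d + 2) → ℤ) (hne : lam ≠ 0)
    (hzero : ∑ i, lam i • liftZ (v i) = 0)
    (hcof : ∀ i, (lam i).natAbs =
      (Matrix.det (Matrix.of fun r (c : Fin (d + 1)) => liftZ (v (i.succAbove c)) r)).natAbs)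
    (mu : Fin (d + 2) → ℤ) (hmu : ∑ i, mu i • liftZ (v i) = 0) :
    ∃ t : ℤ, mu = t • lam := by
  obtain ⟨i₀, hi₀⟩ : ∃ i, lam i ≠ 0 := Function.ne_iff.mp hne
  have hdet0 : (Matrix.of fun r (c : Fin (d + 1)) => liftZ (v (i₀.succAbove c)) r).det ≠ 0 := by
    intro hd
    apply hi₀
    have := hcof i₀
    rw [hd, Int.natAbs_zero] at this
    exact Int.natAbs_eq_zero.mp this
  have cross₀ : ∀ (nu : Fin (d + 2) → ℤ), (∑ i, nu i • liftZ (v i) = 0) → nu i₀ = 0 → nu = 0 := by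
    intro nu hker hnui₀
    set N : Matrix (Fin (d + 1)) (Fin (d + 1)) ℤ :=
      Matrix.of fun r c => liftZ (v (i₀.succAbove c)) r with hN
    set u : Fin (d + 1) → ℤ := fun c => nu (i₀.succAbove c) with hu
    have hmv : N.mulVec u = 0 := by
      funext r
      rw [Fin.sum_univ_succAbove (fun j => nu j • liftZ (v j)) i₀, hnui₀, zero_smul, zero_add] at hker
      have := congrFun hker r
      simpa [Matrix.mulVec, dotProduct, mul_comm, hN, hu] using this
    have hu0 : u = 0 := by
      by_contra hne'
      exact hdet0 (Matrix.exists_mulVec_eq_zero_iff.mp ⟨u, hne', hmv⟩)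
    funext j
    by_cases hj : j = i₀
    · rw [hj, hnui₀]; rfl
    · obtain ⟨c, rfl⟩ := Fin.exists_succAbove_eq hj
      exact congrFun hu0 c
  have hcross0 : ∀ j, lam i₀ * mu j = mu i₀ * lam j := by
    have h := cross₀ (fun j => lam i₀ * mu j - mu i₀ * lam j) ?_ (by ring)
    · intro j
      have := congrFun h j
      simpa [sub_eq_zero] using this
    · calc ∑ j, (lam i₀ * mu j - mu i₀ * lam j) • liftZ (v j)
          = lam i₀ • ∑ j, mu j • liftZ (v j) - mu i₀ • ∑ j, lam j • liftZ (v j) := by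
            rw [Finset.smul_sum, Finset.smul_sum, ← Finset.sum_sub_distrib]
            refine Finset.sum_congr rfl fun j _ => ?_
            rw [sub_smul, smul_smul, smul_smul]
      _ = 0 := by rw [hmu, hzero, smul_zero, smul_zero, sub_zero]
  have hcross : ∀ i j, lam i * mu j = mu i * lam j := by
    intro i j
    apply mul_left_cancel₀ hi₀
    linear_combination lam i * hcross0 j - lam j * hcross0 i
  -- primitivity via Bezout
  have hbez : ∃ c : Fin (d + 2) → ℤ, ∑ i, c i * lam i = 1 := by
    have htop : Ideal.span (Set.range lam) = ⊤ := by
      by_contra hI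
      obtain ⟨P, hPmax, hIP⟩ := Ideal.exists_le_maximal _ hI
      obtain ⟨a, ha⟩ : ∃ a, P = Ideal.span {a} :=
        (IsPrincipalIdealRing.principal P).principal
      have hmem : ∀ i, lam i ∈ P := fun i => hIP (Ideal.subset_span ⟨i, rfl⟩)
      have hane : a ≠ 0 := by
        rintro rfl
        apply hne
        funext i
        have := hmem i
        rw [ha, Ideal.span_singleton_eq_bot.mpr rfl, Ideal.mem_bot] at this
        simpa using this
      have hap : Prime a := (Ideal.span_singleton_prime hane).mp (ha ▸ hPmax.isPrime)
      have hdvd : ∀ i, ((a.natAbs : ℕ) : ℤ) ∣ lam i := by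
        intro i
        rw [Int.natAbs_dvd]
        exact Ideal.mem_span_singleton.mp (ha ▸ hmem i)
      exact no_prime_dvd v (closure_lift_top v hgen) lam hcof
        (Int.prime_iff_natAbs_prime.mp hap) hdvd
    have h1 : (1 : ℤ) ∈ Ideal.span (Set.range lam) := by rw [htop]; trivial
    obtain ⟨c, hc⟩ := (Submodule.mem_span_range_iff_exists_fun ℤ).mp h1
    exact ⟨c, by simpa [smul_eq_mul] using hc⟩
  obtain ⟨c, hc⟩ := hbez
  refine ⟨∑ i, c i * mu i, ?_⟩
  funext j
  have : (∑ i, c i * mu i) * lam j = ∑ i, c i * (mu i * lam j) := by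
    rw [Finset.sum_mul]; exact Finset.sum_congr rfl fun i _ => by ring
  calc mu j = (∑ i, c i * lam i) * mu j := by rw [hc, one_mul]
  _ = ∑ i, c i * (lam i * mu j) := by
        rw [Finset.sum_mul]; exact Finset.sum_congr rfl fun i _ => by ring
  _ = ∑ i, c i * (mu i * lam j) := Finset.sum_congr rfl fun i _ => by rw [hcross]
  _ = (∑ i, c i * mu i) * lam j := this.symm
  _ = (∑ i, c i * mu i) • lam j := by rw [smul_eq_mul]
/-- Every element of the `h`-fold sumset has a representation by coefficients. -/
lemma exists_rep {d h : ℕ} (v : Fin (d + 2) → Fin d → ℤ)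
    (x : Fin d → ℤ) (hx : x ∈ hFoldSumset (Set.range v) h) :
    ∃ β : Fin (d + 2) → ℕ, ∑ i, β i = h ∧ ∑ i, (β i : ℤ) • v i = x := by
  obtain ⟨f, hf, hsum⟩ := hx
  choose g hg using hf
  classical
  refine ⟨fun i => (Finset.univ.filter fun j => g j = i).card, ?_, ?_⟩
  · rw [← Finset.card_eq_sum_card_fiberwise (fun j _ => Finset.mem_univ (g j))]
    simp
  · have h1 : ∀ i : Fin (d + 2),
        ((Finset.univ.filter fun j => g j = i).card : ℤ) • v i
          = ∑ j ∈ Finset.univ.filter (fun j => g j = i), v (g j) := by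
      intro i
      rw [Finset.sum_congr rfl (fun j hj => by
        rw [(Finset.mem_filter.mp hj).2]), Finset.sum_const, natCast_zsmul]
    rw [Finset.sum_congr rfl fun i _ => h1 i,
      Finset.sum_fiberwise_of_maps_to (fun j _ => Finset.mem_univ (g j))]
    rw [← hsum]
    exact Finset.sum_congr rfl fun j _ => hg j
/-- Conversely, coefficient vectors summing to `h` give elements of the sumset. -/
lemma rep_mem {d : ℕ} (v : Fin (d + 2) → Fin d → ℤ) :
    ∀ (h : ℕ) (β : Fin (d + 2) → ℕ), ∑ i, β i = h →
      (∑ i, (β i : ℤ) • v i) ∈ hFoldSumset (Set.range v) h := by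
  intro h
  induction h with
  | zero =>
      intro β hβ
      have hz : ∀ i, β i = 0 := by
        intro i
        have := Finset.sum_eq_zero_iff.mp hβ
        exact this i (Finset.mem_univ i)
      refine ⟨fun j => 0, fun j => j.elim0, ?_⟩
      simp [hz]
  | succ n ih =>
      intro β hβ
      classical
      have hex : ∃ i, β i ≠ 0 := by
        by_contra hall
        push_neg at hall
        simp [hall] at hβ
      obtain ⟨i, hi⟩ := hex
      set β' : Fin (d + 2) → ℕ := Function.update β i (β i - 1) with hβ'
      have hsum' : ∑ j, β' j = n := by
        rw [Finset.sum_update_of_mem (Finset.mem_univ i)]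
        rw [Finset.sum_eq_sum_sdiff_singleton_add (Finset.mem_univ i)] at hβ
        omega
      have key : ∑ j, (β j : ℤ) • v j = (∑ j, (β' j : ℤ) • v j) + v i := by
        rw [Finset.sum_eq_sum_sdiff_singleton_add (Finset.mem_univ i) (fun j => (β j : ℤ) • v j),
          Finset.sum_eq_sum_sdiff_singleton_add (Finset.mem_univ i) (fun j => (β' j : ℤ) • v j)]
        have h2 : ∀ j ∈ Finset.univ \ {i}, (β' j : ℤ) • v j = (β j : ℤ) • v j := by
          intro j hj
          have hji : j ≠ i := by
            have := (Finset.mem_sdiff.mp hj).2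
            simpa using this
          rw [hβ', Function.update_of_ne hji]
        rw [Finset.sum_congr rfl h2]
        have h3 : (β i : ℤ) = (β' i : ℤ) + 1 := by
          simp only [hβ', Function.update_self]
          omega
        rw [h3, add_smul, one_smul]
        abel
      obtain ⟨f', hf', hs'⟩ := ih β' hsum'
      refine ⟨Fin.snoc f' (v i), ?_, ?_⟩
      · intro j
        refine Fin.lastCases ?_ (fun j => ?_) j
        · rw [Fin.snoc_last]; exact ⟨i, rfl⟩
        · rw [Fin.snoc_castSucc]; exact hf' j
      · rw [Fin.sum_univ_castSucc]
        simp only [Fin.snoc_castSucc, Fin.snoc_last]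
        rw [hs', ← key]
/-- Differences of representations are relations among the lifts. -/
lemma diff_ker {d : ℕ} (v : Fin (d + 2) → Fin d → ℤ) (α α' : Fin (d + 2) → ℕ)
    (hs : ∑ i, α i = ∑ i, α' i)
    (hv : ∑ i, (α i : ℤ) • v i = ∑ i, (α' i : ℤ) • v i) :
    ∑ i, ((α i : ℤ) - (α' i : ℤ)) • liftZ (v i) = 0 := by
  funext r
  rw [Finset.sum_apply]
  refine Fin.lastCases ?_ (fun r => ?_) r
  · have : ∀ i : Fin (d + 2), (((α i : ℤ) - (α' i : ℤ)) • liftZ (v i)) (Fin.last d)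
        = (α i : ℤ) - (α' i : ℤ) := by
      intro i; rw [Pi.smul_apply, liftZ_last, smul_eq_mul, mul_one]
    rw [Finset.sum_congr rfl fun i _ => this i, Finset.sum_sub_distrib]
    have : ((∑ i, α i : ℕ) : ℤ) = ((∑ i, α' i : ℕ) : ℤ) := by exact_mod_cast hs
    push_cast at this
    rw [this, sub_self]
    rfl
  · have : ∀ i : Fin (d + 2), (((α i : ℤ) - (α' i : ℤ)) • liftZ (v i)) r.castSucc
        = (α i : ℤ) * v i r - (α' i : ℤ) * v i r := by
      intro i; rw [Pi.smul_apply, liftZ_castSucc, smul_eq_mul, sub_mul]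
    rw [Finset.sum_congr rfl fun i _ => this i, Finset.sum_sub_distrib]
    have h1 := congrFun hv r
    rw [Finset.sum_apply, Finset.sum_apply] at h1
    simp only [Pi.smul_apply, smul_eq_mul] at h1
    rw [h1, sub_self]
    rfl

/-- Existence of a reduced representation. -/
lemma exists_reduced {d : ℕ} (v : Fin (d + 2) → Fin d → ℤ) (lam : Fin (d + 2) → ℤ)
    (hlv : ∑ i, lam i • v i = 0) (hlsum : ∑ i, lam i = 0)
    (hpos : ∃ i, 0 < lam i) (β : Fin (d + 2) → ℕ) :
    ∃ α : Fin (d + 2) → ℕ, ∑ i, α i = ∑ i, β i ∧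
      ∑ i, (α i : ℤ) • v i = ∑ i, (β i : ℤ) • v i ∧
      ∃ i, 0 < lam i ∧ (α i : ℤ) < lam i := by
  classical
  obtain ⟨i₀, hi₀⟩ := hpos
  set P : ℤ → Prop := fun t => ∀ i, 0 ≤ (β i : ℤ) + t * lam i with hP
  have Hinh : ∃ t, P t := ⟨0, fun i => by simp⟩
  have Hbdd : ∃ b : ℤ, ∀ t, P t → b ≤ t := by
    refine ⟨-(β i₀ : ℤ), fun t ht => ?_⟩
    by_contra hlt
    push_neg at hlt
    have h1 := ht i₀
    have hz0 : t ≤ 0 := by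
      have : (0 : ℤ) ≤ β i₀ := Int.natCast_nonneg _
      linarith
    nlinarith [mul_nonneg (neg_nonneg.mpr hz0) (sub_nonneg.mpr hi₀)]
  obtain ⟨t, htP, htmin⟩ := Int.exists_least_of_bdd Hbdd Hinh
  set α : Fin (d + 2) → ℕ := fun i => ((β i : ℤ) + t * lam i).toNat with hα
  have hαi : ∀ i, (α i : ℤ) = (β i : ℤ) + t * lam i := fun i => Int.toNat_of_nonneg (htP i)
  refine ⟨α, ?_, ?_, ?_⟩
  · have : ((∑ i, α i : ℕ) : ℤ) = ((∑ i, β i : ℕ) : ℤ) := by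
      push_cast
      rw [Finset.sum_congr rfl fun i _ => hαi i, Finset.sum_add_distrib, ← Finset.mul_sum,
        hlsum, mul_zero, add_zero]
    exact Nat.cast_injective this
  · have h6 : ∑ i, (α i : ℤ) • v i = ∑ i, ((β i : ℤ) • v i + t • lam i • v i) :=
      Finset.sum_congr rfl fun i _ => by rw [hαi i, add_smul, mul_smul]
    rw [h6, Finset.sum_add_distrib, ← Finset.smul_sum, hlv, smul_zero, add_zero]
  · have hnot : ∃ i, (β i : ℤ) + (t - 1) * lam i < 0 := by
      by_contra hc
      push_neg at hc
      have : t ≤ t - 1 := htmin (t - 1) (fun i => hc i)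
      omega
    obtain ⟨i, hi⟩ := hnot
    refine ⟨i, ?_, ?_⟩
    · nlinarith [htP i, hi]
    · rw [hαi i]; nlinarith [hi]
theorem unique_reduced_representation
    (d : ℕ) (v : Fin (d + 2) → Fin d → ℤ) (hinj : Function.Injective v)
    (hgen : AddSubgroup.closure (Set.range v - Set.range v) = ⊤)
    (lam : Fin (d + 2) → ℤ) (hne : lam ≠ 0)
    (hzero : ∑ i, lam i • liftZ (v i) = 0)
    (hcof : ∀ i, (lam i).natAbs =
      (Matrix.det (Matrix.of fun r (c : Fin (d + 1)) => liftZ (v (i.succAbove c)) r)).natAbs)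
    (h : ℕ) :
    (∀ x ∈ hFoldSumset (Set.range v) h,
      ∃! α : Fin (d + 2) → ℕ,
        (∑ i, α i = h ∧ ∑ i, (α i : ℤ) • v i = x ∧ ∃ i, 0 < lam i ∧ (α i : ℤ) < lam i)) ∧
    Nat.card (hFoldSumset (Set.range v) h)
      = Nat.card {α : Fin (d + 2) → ℕ |
          ∑ i, α i = h ∧ ∃ i, 0 < lam i ∧ (α i : ℤ) < lam i} := by
  have hlsum : ∑ i, lam i = 0 := by
    have h1 := congrFun hzero (Fin.last d)
    rw [Finset.sum_apply] at h1
    simpa [liftZ_last] using h1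
  have hlv : ∑ i, lam i • v i = 0 := by
    funext r
    have h1 := congrFun hzero r.castSucc
    rw [Finset.sum_apply] at h1
    rw [Finset.sum_apply]
    simpa [liftZ_castSucc] using h1
  have hpos : ∃ i, 0 < lam i := by
    by_contra hc
    push_neg at hc
    obtain ⟨j, hj⟩ := Function.ne_iff.mp hne
    have hjneg : lam j < 0 := lt_of_le_of_ne (hc j) hj
    have hlt : ∑ i, lam i < ∑ _i : Fin (d + 2), (0 : ℤ) :=
      Finset.sum_lt_sum (fun i _ => hc i) ⟨j, Finset.mem_univ j, hjneg⟩
    simp [hlsum] at hlt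
  have huniq : ∀ (α α' : Fin (d + 2) → ℕ),
      (∑ i, α i = ∑ i, α' i) → (∑ i, (α i : ℤ) • v i = ∑ i, (α' i : ℤ) • v i) →
      (∃ i, 0 < lam i ∧ (α i : ℤ) < lam i) → (∃ i, 0 < lam i ∧ (α' i : ℤ) < lam i) →
      α = α' := by
    intro α α' hs hv hw hw'
    obtain ⟨t, ht⟩ := ker_eq_span v hgen lam hne hzero hcof _ (diff_ker v α α' hs hv)
    have hti : ∀ i, (α i : ℤ) - α' i = t * lam i := fun i => by
      have := congrFun ht i
      simpa [smul_eq_mul] using this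
    rcases lt_trichotomy t 0 with hlt | hlt | hlt
    · obtain ⟨i, hip, hia⟩ := hw'
      have h1 := hti i
      nlinarith [Int.natCast_nonneg (α i), Int.natCast_nonneg (α' i),
        mul_le_mul_of_nonneg_right (by omega : t ≤ -1) hip.le]
    · funext i
      have h1 := hti i
      rw [hlt, zero_mul, sub_eq_zero] at h1
      exact_mod_cast h1
    · obtain ⟨i, hip, hia⟩ := hw
      have h1 := hti i
      nlinarith [Int.natCast_nonneg (α i), Int.natCast_nonneg (α' i),
        mul_le_mul_of_nonneg_right (by omega : (1 : ℤ) ≤ t) hip.le]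
  constructor
  · intro x hx
    obtain ⟨β, hβs, hβv⟩ := exists_rep v x hx
    obtain ⟨α, hαs, hαv, hαw⟩ := exists_reduced v lam hlv hlsum hpos β
    refine ⟨α, ⟨by rw [hαs, hβs], by rw [hαv, hβv], hαw⟩, ?_⟩
    rintro α' ⟨h1, h2, h3⟩
    exact huniq α' α (by rw [h1, hαs, hβs]) (by rw [h2, hαv, hβv]) h3 hαw
  · classical
    have e : ∀ α : {α : Fin (d + 2) → ℕ |
          ∑ i, α i = h ∧ ∃ i, 0 < lam i ∧ (α i : ℤ) < lam i},
        (∑ i, ((α : Fin (d + 2) → ℕ) i : ℤ) • v i) ∈ hFoldSumset (Set.range v) h := by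
      rintro ⟨α, hα1, hα2⟩
      have := rep_mem v h α hα1
      simpa using this
    refine (Nat.card_eq_of_bijective
      (fun α => (⟨_, e α⟩ : hFoldSumset (Set.range v) h)) ⟨?_, ?_⟩).symm
    · rintro ⟨α, hα1, hα2⟩ ⟨α', hα'1, hα'2⟩ hEq
      simp only [Subtype.mk.injEq] at hEq
      exact Subtype.ext (huniq α α' (by rw [hα1, hα'1]) hEq hα2 hα'2)
    · rintro ⟨x, hx⟩
      obtain ⟨β, hβs, hβv⟩ := exists_rep v x hx
      obtain ⟨α, hαs, hαv, hαw⟩ := exists_reduced v lam hlv hlsum hpos β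
      refine ⟨⟨α, ⟨by rw [hαs, hβs], hαw⟩⟩, Subtype.ext ?_⟩
      simp only
      rw [hαv, hβv]
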